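/- Let p > 2, η ≥ 0, θ ∈ (0,1), C_{η,p} = ((1+η²)^{p/2} + η^p − 2(1/2+η²)^{p/2})^{-1}. For any unit vector q ∈ ℝⁿ, let r = (1/2)·min_i min{‖q−e_i‖₂², ‖q+e_i‖₂²}, and let Ω be a θ-Bernoulli random subset of {1,…,n}. Then r ≤ (C_{η,p}/(θ(1−θ)))·(θ(1+η²)^{p/2} + (1−θ)η^p − E_Ω[(‖q_Ω‖₂² + η²)^{p/2}]). -/

import Mathlib

open Real Finset


lemma noisy_Kpos (p η : ℝ) (hp : 2 < p) (hη : 0 ≤ η) :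
    0 < (1 + η ^ 2) ^ (p / 2) + ((η:ℝ) ^ 2) ^ (p / 2)
        - 2 * ((1 : ℝ) / 2 + η ^ 2) ^ (p / 2) := by
  have hs : (1 : ℝ) < p / 2 := by linarith
  have h := (strictConvexOn_rpow hs).2 (Set.mem_Ici.mpr (sq_nonneg η))
      (Set.mem_Ici.mpr (by positivity : (0:ℝ) ≤ 1 + η ^ 2))
      (show ((η:ℝ) ^ 2) ≠ 1 + η ^ 2 by intro hh; linarith)
      (by norm_num : (0:ℝ) < 1/2) (by norm_num : (0:ℝ) < 1/2) (by norm_num)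
  simp only [smul_eq_mul] at h
  rw [show (1/2:ℝ) * (η ^ 2) + 1/2 * (1 + η ^ 2) = 1/2 + η ^ 2 by ring] at h
  linarith

lemma noisy_pointwise (p η : ℝ) (hp : 2 < p) (hη : 0 ≤ η) {x : ℝ}
    (hx0 : 0 ≤ x) (hx1 : x ≤ 1) :
    (x + η ^ 2) ^ (p / 2) ≤ (1 - x) * ((η:ℝ) ^ 2) ^ (p / 2) + x * (1 + η ^ 2) ^ (p / 2)
      - ((1 + η ^ 2) ^ (p / 2) + ((η:ℝ) ^ 2) ^ (p / 2)
          - 2 * ((1 : ℝ) / 2 + η ^ 2) ^ (p / 2)) * (x * (1 - x)) := by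
  have hs : (1 : ℝ) ≤ p / 2 := by linarith
  have hconv := (convexOn_rpow hs).2
  have hη2 : (0:ℝ) ≤ η ^ 2 := sq_nonneg η
  have hm1 : (0:ℝ) ≤ 1/2 + η ^ 2 := by linarith
  have hm2 : (0:ℝ) ≤ 1 + η ^ 2 := by linarith
  have hK0 : (0:ℝ) ≤ (1 + η ^ 2) ^ (p / 2) + ((η:ℝ) ^ 2) ^ (p / 2)
      - 2 * ((1 : ℝ) / 2 + η ^ 2) ^ (p / 2) :=
    le_of_lt (noisy_Kpos p η hp hη)
  rcases le_total x (1/2) with hx | hx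
  · have h1 := hconv (Set.mem_Ici.mpr hη2) (Set.mem_Ici.mpr hm1)
        (by linarith : (0:ℝ) ≤ 1 - 2*x) (by linarith : (0:ℝ) ≤ 2*x) (by ring)
    simp only [smul_eq_mul] at h1
    rw [show (1 - 2*x) * (η ^ 2) + 2*x * (1/2 + η ^ 2) = x + η ^ 2 by ring] at h1
    nlinarith [mul_nonneg hK0 (sq_nonneg x)]
  · have h1 := hconv (Set.mem_Ici.mpr hm1) (Set.mem_Ici.mpr hm2)
        (by linarith : (0:ℝ) ≤ 2 - 2*x) (by linarith : (0:ℝ) ≤ 2*x - 1) (by ring)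
    simp only [smul_eq_mul] at h1
    rw [show (2 - 2*x) * (1/2 + η ^ 2) + (2*x - 1) * (1 + η ^ 2) = x + η ^ 2 by ring] at h1
    nlinarith [mul_nonneg hK0 (sq_nonneg (1 - x))]

lemma bern_master (n : ℕ) (θ : ℝ) (T : Finset (Fin (n + 1))) :
    ∑ S ∈ (Finset.univ : Finset (Fin (n + 1))).powerset,
      θ ^ S.card * (1 - θ) ^ (n + 1 - S.card) * (if T ⊆ S then (1:ℝ) else 0)
      = θ ^ T.card := by
  have h := Finset.prod_add (fun _ : Fin (n + 1) => θ)
      (fun k => if k ∈ T then 0 else 1 - θ) Finset.univ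
  have hL : (∏ k : Fin (n + 1), (θ + if k ∈ T then 0 else 1 - θ)) = θ ^ T.card := by
    have h1 : ∀ k : Fin (n + 1), (θ + if k ∈ T then 0 else 1 - θ)
        = (if k ∈ T then θ else 1) := by intro k; split_ifs <;> ring
    rw [Finset.prod_congr rfl fun k _ => h1 k, Finset.prod_ite_mem, Finset.univ_inter, Finset.prod_const]
  have hR : ∀ S ∈ (Finset.univ : Finset (Fin (n + 1))).powerset,
      θ ^ S.card * (1 - θ) ^ (n + 1 - S.card) * (if T ⊆ S then (1:ℝ) else 0)
      = (∏ _i ∈ S, θ) * ∏ i ∈ Finset.univ \ S, (if i ∈ T then (0:ℝ) else 1 - θ) := by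
    intro S _
    rw [Finset.prod_const]
    by_cases hTS : T ⊆ S
    · have h2 : ∀ i ∈ Finset.univ \ S, (if i ∈ T then (0:ℝ) else 1 - θ) = 1 - θ := by
        intro i hi
        rw [Finset.mem_sdiff] at hi
        exact if_neg fun hiT => hi.2 (hTS hiT)
      rw [Finset.prod_congr rfl h2, Finset.prod_const, if_pos hTS,
        Finset.card_sdiff_of_subset (Finset.subset_univ S), Finset.card_univ, Fintype.card_fin]
      ring
    · obtain ⟨t, htT, htS⟩ := Finset.not_subset.mp hTS
      have hz : (∏ i ∈ Finset.univ \ S, (if i ∈ T then (0:ℝ) else 1 - θ)) = 0 :=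
        Finset.prod_eq_zero (Finset.mem_sdiff.mpr ⟨Finset.mem_univ t, htS⟩) (if_pos htT)
      rw [hz, if_neg hTS]
      ring
  rw [Finset.sum_congr rfl hR, ← h, hL]


/-- Noisy sharpness over the sphere: the deficiency of `E_Ω (‖q_Ω‖₂²+η²)^(p/2)` from its maximum
controls half the squared distance of the unit vector `q` to the nearest signed coordinate
vector, with constant `C_{η,p} = ((1+η²)^(p/2) + η^p − 2(1/2+η²)^(p/2))⁻¹`. -/
theorem noisy_sphere_sharpness (n : ℕ) (p η θ : ℝ) (hp : 2 < p) (hη : 0 ≤ η)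
    (hθ : θ ∈ Set.Ioo (0 : ℝ) 1) (q : Fin (n + 1) → ℝ) (hq : ∑ i, q i ^ 2 = 1) :
    (1 / 2) * (Finset.univ.inf' Finset.univ_nonempty (fun i : Fin (n + 1) =>
        min (∑ j, (q j - (if j = i then 1 else 0)) ^ 2)
            (∑ j, (q j + (if j = i then 1 else 0)) ^ 2)))
      ≤ ((1 + η ^ 2) ^ (p / 2) + η ^ p - 2 * ((1 : ℝ) / 2 + η ^ 2) ^ (p / 2))⁻¹ /
            (θ * (1 - θ)) *
          (θ * (1 + η ^ 2) ^ (p / 2) + (1 - θ) * η ^ p -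
            ∑ S ∈ (Finset.univ : Finset (Fin (n + 1))).powerset,
              θ ^ S.card * (1 - θ) ^ (n + 1 - S.card) *
                ((∑ i ∈ S, q i ^ 2) + η ^ 2) ^ (p / 2)) := by
  obtain ⟨hθ0, hθ1⟩ := hθ
  -- rewrite η ^ p as (η^2)^(p/2)
  have hBp : η ^ p = ((η:ℝ) ^ 2) ^ (p / 2) := by
    rw [← Real.rpow_natCast η 2, ← Real.rpow_mul hη]
    congr 1
    push_cast
    ring
  rw [hBp]
  -- LHS analysis
  have hsub : ∀ i : Fin (n + 1),
      (∑ j, (q j - (if j = i then (1:ℝ) else 0)) ^ 2) = 2 - 2 * q i := by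
    intro i
    have h1 : ∀ j : Fin (n + 1), (q j - (if j = i then (1:ℝ) else 0)) ^ 2
        = q j ^ 2 + (if j = i then 1 - 2 * q j else 0) := by
      intro j; split_ifs <;> ring
    rw [Finset.sum_congr rfl fun j _ => h1 j, Finset.sum_add_distrib, hq]
    simp
    ring
  have hadd : ∀ i : Fin (n + 1),
      (∑ j, (q j + (if j = i then (1:ℝ) else 0)) ^ 2) = 2 + 2 * q i := by
    intro i
    have h1 : ∀ j : Fin (n + 1), (q j + (if j = i then (1:ℝ) else 0)) ^ 2
        = q j ^ 2 + (if j = i then 1 + 2 * q j else 0) := by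
      intro j; split_ifs <;> ring
    rw [Finset.sum_congr rfl fun j _ => h1 j, Finset.sum_add_distrib, hq]
    simp
    ring
  have hmin : ∀ i : Fin (n + 1),
      min (∑ j, (q j - (if j = i then (1:ℝ) else 0)) ^ 2)
          (∑ j, (q j + (if j = i then (1:ℝ) else 0)) ^ 2) = 2 - 2 * |q i| := by
    intro i
    rw [hsub i, hadd i]
    rcases le_total 0 (q i) with h | h
    · rw [abs_of_nonneg h, min_eq_left (by linarith)]
    · rw [abs_of_nonpos h, min_eq_right (by linarith)]; ring
  obtain ⟨i₀, -, hi₀⟩ := Finset.exists_mem_eq_inf' Finset.univ_nonempty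
      (fun i : Fin (n + 1) =>
        min (∑ j, (q j - (if j = i then (1:ℝ) else 0)) ^ 2)
            (∑ j, (q j + (if j = i then (1:ℝ) else 0)) ^ 2))
  have hle : ∀ i : Fin (n + 1), |q i| ≤ |q i₀| := by
    intro i
    have h := Finset.inf'_le (fun i : Fin (n + 1) =>
        min (∑ j, (q j - (if j = i then (1:ℝ) else 0)) ^ 2)
            (∑ j, (q j + (if j = i then (1:ℝ) else 0)) ^ 2)) (Finset.mem_univ i)
    rw [hi₀, hmin i₀, hmin i] at h
    linarith
  rw [hi₀, hmin i₀]
  -- basic facts about q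
  have hsq_le : ∀ i : Fin (n + 1), q i ^ 2 ≤ q i₀ ^ 2 := by
    intro i
    rw [← sq_abs (q i), ← sq_abs (q i₀)]
    exact pow_le_pow_left₀ (abs_nonneg _) (hle i) 2
  have hsum_sq : q i₀ ^ 2 ≤ 1 := by
    rw [← hq]
    exact Finset.single_le_sum (fun i _ => sq_nonneg (q i)) (Finset.mem_univ i₀)
  have habs1 : |q i₀| ≤ 1 := by
    nlinarith [sq_abs (q i₀), abs_nonneg (q i₀), sq_nonneg (|q i₀| - 1)]
  have hQ4le : (∑ i, q i ^ 2 * q i ^ 2) ≤ |q i₀| := by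
    have h1 : (∑ i, q i ^ 2 * q i ^ 2) ≤ ∑ i, q i ^ 2 * q i₀ ^ 2 :=
      Finset.sum_le_sum fun i _ => mul_le_mul_of_nonneg_left (hsq_le i) (sq_nonneg _)
    rw [← Finset.sum_mul, hq, one_mul] at h1
    nlinarith [sq_abs (q i₀), abs_nonneg (q i₀)]
  have hQ4nn : (0:ℝ) ≤ ∑ i, q i ^ 2 * q i ^ 2 :=
    Finset.sum_nonneg fun i _ => mul_nonneg (sq_nonneg _) (sq_nonneg _)
  -- Bernoulli moments
  have M0 : ∑ S ∈ (Finset.univ : Finset (Fin (n + 1))).powerset,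
      θ ^ S.card * (1 - θ) ^ (n + 1 - S.card) = 1 := by
    have h := bern_master n θ ∅
    simpa using h
  have M1 : ∀ i : Fin (n + 1), ∑ S ∈ (Finset.univ : Finset (Fin (n + 1))).powerset,
      θ ^ S.card * (1 - θ) ^ (n + 1 - S.card) * (if i ∈ S then (1:ℝ) else 0) = θ := by
    intro i
    have h := bern_master n θ {i}
    simpa [Finset.singleton_subset_iff] using h
  have M2 : ∀ i j : Fin (n + 1), i ≠ j →
      ∑ S ∈ (Finset.univ : Finset (Fin (n + 1))).powerset,
        θ ^ S.card * (1 - θ) ^ (n + 1 - S.card) *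
          ((if i ∈ S then (1:ℝ) else 0) * (if j ∈ S then (1:ℝ) else 0)) = θ ^ 2 := by
    intro i j hij
    have h := bern_master n θ {i, j}
    have hc : ({i, j} : Finset (Fin (n + 1))).card = 2 := by
      rw [Finset.card_insert_of_notMem (by simp [hij]), Finset.card_singleton]
    rw [hc] at h
    rw [← h]
    refine Finset.sum_congr rfl fun S _ => ?_
    by_cases hi : i ∈ S <;> by_cases hj : j ∈ S <;>
      simp [Finset.insert_subset_iff, hi, hj]
  -- first moment of ‖q_S‖²
  have hxite : ∀ S : Finset (Fin (n + 1)),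
      (∑ i ∈ S, q i ^ 2) = ∑ i, (if i ∈ S then q i ^ 2 else 0) := by
    intro S
    rw [Finset.sum_ite_mem, Finset.univ_inter]
  have hEx : ∑ S ∈ (Finset.univ : Finset (Fin (n + 1))).powerset,
      θ ^ S.card * (1 - θ) ^ (n + 1 - S.card) * (∑ i ∈ S, q i ^ 2) = θ := by
    have h1 : ∀ S ∈ (Finset.univ : Finset (Fin (n + 1))).powerset,
        θ ^ S.card * (1 - θ) ^ (n + 1 - S.card) * (∑ i ∈ S, q i ^ 2)
        = ∑ i, (θ ^ S.card * (1 - θ) ^ (n + 1 - S.card) * (if i ∈ S then (1:ℝ) else 0))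
            * q i ^ 2 := by
      intro S _
      rw [hxite S, Finset.mul_sum]
      exact Finset.sum_congr rfl fun i _ => by split_ifs <;> ring
    rw [Finset.sum_congr rfl h1, Finset.sum_comm]
    have h2 : ∀ i : Fin (n + 1),
        (∑ S ∈ (Finset.univ : Finset (Fin (n + 1))).powerset,
          (θ ^ S.card * (1 - θ) ^ (n + 1 - S.card) * (if i ∈ S then (1:ℝ) else 0))
            * q i ^ 2) = θ * q i ^ 2 := by
      intro i
      rw [← Finset.sum_mul, M1 i]
    rw [Finset.sum_congr rfl fun i _ => h2 i, ← Finset.mul_sum, hq, mul_one]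
  -- second moment
  have hEx2 : ∑ S ∈ (Finset.univ : Finset (Fin (n + 1))).powerset,
      θ ^ S.card * (1 - θ) ^ (n + 1 - S.card) *
        ((∑ i ∈ S, q i ^ 2) * (∑ i ∈ S, q i ^ 2))
      = θ ^ 2 + (θ - θ ^ 2) * ∑ i, q i ^ 2 * q i ^ 2 := by
    have h1 : ∀ S ∈ (Finset.univ : Finset (Fin (n + 1))).powerset,
        θ ^ S.card * (1 - θ) ^ (n + 1 - S.card) *
          ((∑ i ∈ S, q i ^ 2) * (∑ i ∈ S, q i ^ 2))
        = ∑ i, ∑ j, (θ ^ S.card * (1 - θ) ^ (n + 1 - S.card) *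
            ((if i ∈ S then (1:ℝ) else 0) * (if j ∈ S then (1:ℝ) else 0)))
              * (q i ^ 2 * q j ^ 2) := by
      intro S _
      rw [hxite S, Finset.sum_mul_sum, Finset.mul_sum]
      refine Finset.sum_congr rfl fun i _ => ?_
      rw [Finset.mul_sum]
      exact Finset.sum_congr rfl fun j _ => by split_ifs <;> ring
    rw [Finset.sum_congr rfl h1, Finset.sum_comm]
    have h2 : ∀ i : Fin (n + 1),
        (∑ S ∈ (Finset.univ : Finset (Fin (n + 1))).powerset, ∑ j,
          (θ ^ S.card * (1 - θ) ^ (n + 1 - S.card) *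
            ((if i ∈ S then (1:ℝ) else 0) * (if j ∈ S then (1:ℝ) else 0)))
              * (q i ^ 2 * q j ^ 2))
        = ∑ j, (if i = j then θ else θ ^ 2) * (q i ^ 2 * q j ^ 2) := by
      intro i
      rw [Finset.sum_comm]
      refine Finset.sum_congr rfl fun j _ => ?_
      rw [← Finset.sum_mul]
      congr 1
      by_cases hij : i = j
      · subst hij
        rw [if_pos rfl]
        calc ∑ S ∈ (Finset.univ : Finset (Fin (n + 1))).powerset,
              θ ^ S.card * (1 - θ) ^ (n + 1 - S.card) *
                ((if i ∈ S then (1:ℝ) else 0) * (if i ∈ S then (1:ℝ) else 0))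
            = ∑ S ∈ (Finset.univ : Finset (Fin (n + 1))).powerset,
              θ ^ S.card * (1 - θ) ^ (n + 1 - S.card) * (if i ∈ S then (1:ℝ) else 0) :=
            Finset.sum_congr rfl fun S _ => by by_cases hi : i ∈ S <;> simp [hi]
          _ = θ := M1 i
      · rw [if_neg hij]
        exact M2 i j hij
    rw [Finset.sum_congr rfl fun i _ => h2 i]
    have h3 : ∀ i : Fin (n + 1),
        (∑ j, (if i = j then θ else θ ^ 2) * (q i ^ 2 * q j ^ 2))
        = θ ^ 2 * q i ^ 2 + (θ - θ ^ 2) * (q i ^ 2 * q i ^ 2) := by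
      intro i
      have h4 : ∀ j : Fin (n + 1), (if i = j then θ else θ ^ 2) * (q i ^ 2 * q j ^ 2)
          = θ ^ 2 * (q i ^ 2 * q j ^ 2)
            + (if j = i then (θ - θ ^ 2) * (q i ^ 2 * q j ^ 2) else 0) := by
        intro j
        rcases eq_or_ne i j with h | h
        · subst h; simp; ring
        · rw [if_neg h, if_neg (Ne.symm h)]; ring
      rw [Finset.sum_congr rfl fun j _ => h4 j, Finset.sum_add_distrib]
      have h5 : ∑ j, θ ^ 2 * (q i ^ 2 * q j ^ 2) = θ ^ 2 * q i ^ 2 := by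
        have : ∀ j : Fin (n + 1), θ ^ 2 * (q i ^ 2 * q j ^ 2)
            = (θ ^ 2 * q i ^ 2) * q j ^ 2 := fun j => by ring
        rw [Finset.sum_congr rfl fun j _ => this j, ← Finset.mul_sum, hq, mul_one]
      rw [h5]
      simp
    rw [Finset.sum_congr rfl fun i _ => h3 i, Finset.sum_add_distrib]
    have h6 : ∑ i, θ ^ 2 * q i ^ 2 = θ ^ 2 := by
      rw [← Finset.mul_sum, hq, mul_one]
    rw [h6, ← Finset.mul_sum]
  -- bound the expectation using pointwise convexity
  set A : ℝ := (1 + η ^ 2) ^ (p / 2) with hA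
  set B : ℝ := ((η:ℝ) ^ 2) ^ (p / 2) with hB
  set C : ℝ := ((1:ℝ) / 2 + η ^ 2) ^ (p / 2) with hC
  set K : ℝ := A + B - 2 * C with hKdef
  set Q4 : ℝ := ∑ i, q i ^ 2 * q i ^ 2 with hQ4def
  have hK : 0 < K := by
    rw [hKdef, hA, hB, hC]
    exact noisy_Kpos p η hp hη
  have hEbound : ∑ S ∈ (Finset.univ : Finset (Fin (n + 1))).powerset,
      θ ^ S.card * (1 - θ) ^ (n + 1 - S.card) * ((∑ i ∈ S, q i ^ 2) + η ^ 2) ^ (p / 2)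
      ≤ B + (A - B - K) * θ + K * (θ ^ 2 + (θ - θ ^ 2) * Q4) := by
    calc ∑ S ∈ (Finset.univ : Finset (Fin (n + 1))).powerset,
        θ ^ S.card * (1 - θ) ^ (n + 1 - S.card) * ((∑ i ∈ S, q i ^ 2) + η ^ 2) ^ (p / 2)
        ≤ ∑ S ∈ (Finset.univ : Finset (Fin (n + 1))).powerset,
            (B * (θ ^ S.card * (1 - θ) ^ (n + 1 - S.card))
              + (A - B - K) * (θ ^ S.card * (1 - θ) ^ (n + 1 - S.card) * (∑ i ∈ S, q i ^ 2))
              + K * (θ ^ S.card * (1 - θ) ^ (n + 1 - S.card) *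
                  ((∑ i ∈ S, q i ^ 2) * (∑ i ∈ S, q i ^ 2)))) := by
          refine Finset.sum_le_sum fun S hS => ?_
          have hx0 : (0:ℝ) ≤ ∑ i ∈ S, q i ^ 2 :=
            Finset.sum_nonneg fun i _ => sq_nonneg _
          have hx1 : (∑ i ∈ S, q i ^ 2) ≤ 1 := by
            rw [← hq]
            exact Finset.sum_le_sum_of_subset_of_nonneg (Finset.subset_univ S)
              (fun i _ _ => sq_nonneg _)
          have hpw := noisy_pointwise p η hp hη hx0 hx1
          rw [← hA, ← hB, ← hC] at hpw
          have hwnn : (0:ℝ) ≤ θ ^ S.card * (1 - θ) ^ (n + 1 - S.card) :=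
            mul_nonneg (pow_nonneg hθ0.le _) (pow_nonneg (by linarith) _)
          calc θ ^ S.card * (1 - θ) ^ (n + 1 - S.card) * ((∑ i ∈ S, q i ^ 2) + η ^ 2) ^ (p / 2)
              ≤ θ ^ S.card * (1 - θ) ^ (n + 1 - S.card) *
                ((1 - (∑ i ∈ S, q i ^ 2)) * B + (∑ i ∈ S, q i ^ 2) * A
                  - (A + B - 2 * C) * ((∑ i ∈ S, q i ^ 2) * (1 - (∑ i ∈ S, q i ^ 2)))) :=
              mul_le_mul_of_nonneg_left hpw hwnn
            _ = B * (θ ^ S.card * (1 - θ) ^ (n + 1 - S.card))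
              + (A - B - K) * (θ ^ S.card * (1 - θ) ^ (n + 1 - S.card) * (∑ i ∈ S, q i ^ 2))
              + K * (θ ^ S.card * (1 - θ) ^ (n + 1 - S.card) *
                  ((∑ i ∈ S, q i ^ 2) * (∑ i ∈ S, q i ^ 2))) := by
              rw [hKdef]; ring
      _ = B * (∑ S ∈ (Finset.univ : Finset (Fin (n + 1))).powerset,
              θ ^ S.card * (1 - θ) ^ (n + 1 - S.card))
          + (A - B - K) * (∑ S ∈ (Finset.univ : Finset (Fin (n + 1))).powerset,
              θ ^ S.card * (1 - θ) ^ (n + 1 - S.card) * (∑ i ∈ S, q i ^ 2))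
          + K * (∑ S ∈ (Finset.univ : Finset (Fin (n + 1))).powerset,
              θ ^ S.card * (1 - θ) ^ (n + 1 - S.card) *
                ((∑ i ∈ S, q i ^ 2) * (∑ i ∈ S, q i ^ 2))) := by
          rw [Finset.sum_add_distrib, Finset.sum_add_distrib, ← Finset.mul_sum,
            ← Finset.mul_sum, ← Finset.mul_sum]
      _ = B + (A - B - K) * θ + K * (θ ^ 2 + (θ - θ ^ 2) * Q4) := by
          rw [M0, hEx, hEx2, mul_one]
  -- conclude
  have ht : 0 < θ * (1 - θ) := mul_pos hθ0 (by linarith)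
  have hKt : 0 < K * (θ * (1 - θ)) := mul_pos hK ht
  have hiden : θ * A + (1 - θ) * B
      - (B + (A - B - K) * θ + K * (θ ^ 2 + (θ - θ ^ 2) * Q4))
      = K * (θ * (1 - θ)) * (1 - Q4) := by ring
  have hD : K * (θ * (1 - θ)) * (1 - Q4)
      ≤ θ * A + (1 - θ) * B -
        ∑ S ∈ (Finset.univ : Finset (Fin (n + 1))).powerset,
          θ ^ S.card * (1 - θ) ^ (n + 1 - S.card) *
            ((∑ i ∈ S, q i ^ 2) + η ^ 2) ^ (p / 2) := by
    linarith [hEbound]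
  rw [show K⁻¹ / (θ * (1 - θ)) * (θ * A + (1 - θ) * B -
      ∑ S ∈ (Finset.univ : Finset (Fin (n + 1))).powerset,
        θ ^ S.card * (1 - θ) ^ (n + 1 - S.card) *
          ((∑ i ∈ S, q i ^ 2) + η ^ 2) ^ (p / 2))
      = (θ * A + (1 - θ) * B -
      ∑ S ∈ (Finset.univ : Finset (Fin (n + 1))).powerset,
        θ ^ S.card * (1 - θ) ^ (n + 1 - S.card) *
          ((∑ i ∈ S, q i ^ 2) + η ^ 2) ^ (p / 2)) / (K * (θ * (1 - θ)))
    by rw [div_mul_eq_mul_div, inv_mul_eq_div, div_div]]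
  rw [le_div_iff₀ hKt]
  nlinarith [mul_le_mul_of_nonneg_right
    (show 1 - |q i₀| ≤ 1 - Q4 by linarith [hQ4le]) hKt.le, hD]
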